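/- Let (M, μ) be a σ-finite measure space, n ≥ 1, let H ⊆ ℝⁿ be a polarizer, and let 1 ≤ s < ∞. For all measurable functions u, v : M × ℝⁿ → [0, ∞), polarization is non-expansive: ∫ |u^H − v^H|^s d(μ ⊗ vol) ≤ ∫ |u − v|^s d(μ ⊗ vol) (both sides taken in [0, ∞]). -/

import Mathlib

open MeasureTheory Metric
open scoped RealInnerProductSpace ENNReal

noncomputable section

/-- Reflection of `ℝⁿ` across the hyperplane `{y : ⟨y, e⟩ = c}`. -/
def reflectHyp {n : ℕ} (e : EuclideanSpace ℝ (Fin n)) (c : ℝ)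
    (y : EuclideanSpace ℝ (Fin n)) : EuclideanSpace ℝ (Fin n) :=
  y - (2 * (⟪y, e⟫ - c)) • e

/-- Polarization of `u : M × ℝⁿ → ℝ` with respect to the polarizer
`H = {y : ⟨y, e⟩ > c}`. -/
def polarize {M : Type*} {n : ℕ} (e : EuclideanSpace ℝ (Fin n)) (c : ℝ)
    (u : M × EuclideanSpace ℝ (Fin n) → ℝ)
    (z : M × EuclideanSpace ℝ (Fin n)) : ℝ :=
  if c < ⟪z.2, e⟫ then max (u z) (u (z.1, reflectHyp e c z.2))
  else min (u z) (u (z.1, reflectHyp e c z.2))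

section Aux

variable {n : ℕ} {e : EuclideanSpace ℝ (Fin n)} {c : ℝ}

lemma inner_reflectHyp (he : ‖e‖ = 1) (y : EuclideanSpace ℝ (Fin n)) :
    ⟪reflectHyp e c y, e⟫ = 2 * c - ⟪y, e⟫ := by
  have h : ⟪e, e⟫ = (1 : ℝ) := by
    rw [real_inner_self_eq_norm_sq, he]; norm_num
  simp only [reflectHyp, inner_sub_left, real_inner_smul_left, h]
  ring

lemma reflectHyp_invol (he : ‖e‖ = 1) (y : EuclideanSpace ℝ (Fin n)) :
    reflectHyp e c (reflectHyp e c y) = y := by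
  conv_lhs => rw [reflectHyp, inner_reflectHyp he, reflectHyp]
  have h : (2 * (⟪y, e⟫ - c)) + (2 * ((2 * c - ⟪y, e⟫) - c)) = 0 := by ring
  rw [sub_sub, ← add_smul, h, zero_smul, sub_zero]

lemma reflectHyp_continuous : Continuous (reflectHyp e c) := by
  have h : Continuous (fun y : EuclideanSpace ℝ (Fin n) => ⟪y, e⟫) :=
    continuous_id.inner continuous_const
  exact continuous_id.sub ((continuous_const.mul (h.sub continuous_const)).smul
    continuous_const)

lemma reflectHyp_measurePreserving (he : ‖e‖ = 1) :
    MeasurePreserving (reflectHyp e c) (volume : Measure (EuclideanSpace ℝ (Fin n))) volume := by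
  have ht : MeasurePreserving (fun y : EuclideanSpace ℝ (Fin n) => y + (2 * c) • e)
      volume volume := measurePreserving_add_right volume _
  have heq : reflectHyp e c = (fun y : EuclideanSpace ℝ (Fin n) => y + (2 * c) • e) ∘
      ⇑((Submodule.reflection (ℝ ∙ e)).trans (LinearIsometryEquiv.neg ℝ)) := by
    funext y
    simp only [Function.comp_apply, LinearIsometryEquiv.trans_apply,
      LinearIsometryEquiv.coe_neg, Submodule.reflection_singleton_apply, reflectHyp,
      real_inner_comm e y, he]
    norm_num
    module
  rw [heq]
  exact ht.comp (LinearIsometryEquiv.measurePreserving _)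

lemma karamata2 {f : ℝ → ℝ} (hf : ConvexOn ℝ Set.univ f) {a b p q : ℝ}
    (hap : a ≤ p) (hpb : p ≤ b) (hpq : p + q = a + b) : f p + f q ≤ f a + f b := by
  rcases eq_or_lt_of_le (hap.trans hpb) with hab | hab
  · have hpa : p = a := le_antisymm (hab ▸ hpb) hap
    have hqb : q = b := by linarith
    simp [hpa, hqb]
  · set t := (b - p) / (b - a) with ht
    have hba : b - a ≠ 0 := by linarith
    have key : t * (b - a) = b - p := div_mul_cancel₀ _ hba
    have ht0 : 0 ≤ t := div_nonneg (by linarith) (by linarith)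
    have ht1 : t ≤ 1 := by rw [ht, div_le_one (by linarith)]; linarith
    have hp : p = t * a + (1 - t) * b := by linear_combination key
    have hq : q = (1 - t) * a + t * b := by linear_combination hpq - hp
    have h1 := hf.2 (Set.mem_univ a) (Set.mem_univ b) ht0 (by linarith : (0:ℝ) ≤ 1 - t)
      (by ring)
    have h2 := hf.2 (Set.mem_univ a) (Set.mem_univ b) (by linarith : (0:ℝ) ≤ 1 - t) ht0
      (by ring)
    simp only [smul_eq_mul] at h1 h2
    rw [← hp] at h1
    rw [← hq] at h2
    linarith

lemma convexOn_abs_rpow {s : ℝ} (hs : 1 ≤ s) :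
    ConvexOn ℝ Set.univ (fun x : ℝ => |x| ^ s) := by
  have hs0 : (0:ℝ) ≤ s := le_trans zero_le_one hs
  refine ⟨convex_univ, fun x _ y _ a b ha hb hab => ?_⟩
  simp only [smul_eq_mul]
  calc |a * x + b * y| ^ s ≤ (a * |x| + b * |y|) ^ s := by
        apply Real.rpow_le_rpow (abs_nonneg _) _ hs0
        calc |a * x + b * y| ≤ |a * x| + |b * y| := abs_add_le _ _
          _ = a * |x| + b * |y| := by rw [abs_mul, abs_mul, abs_of_nonneg ha, abs_of_nonneg hb]
    _ ≤ a * |x| ^ s + b * |y| ^ s := by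
        have := (convexOn_rpow hs).2 (Set.mem_Ici.2 (abs_nonneg x)) (Set.mem_Ici.2 (abs_nonneg y))
          ha hb hab
        simpa using this

lemma key_real {s : ℝ} (hs : 1 ≤ s) (a a' b b' : ℝ) :
    |max a a' - max b b'| ^ s + |min a a' - min b b'| ^ s ≤ |a - b| ^ s + |a' - b'| ^ s := by
  have hφ := convexOn_abs_rpow hs
  rcases le_total a' a with h1 | h1 <;> rcases le_total b' b with h2 | h2
  · rw [max_eq_left h1, max_eq_left h2, min_eq_right h1, min_eq_right h2]
  · rw [max_eq_left h1, max_eq_right h2, min_eq_right h1, min_eq_left h2]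
    rw [add_comm (|a - b| ^ s)]
    exact karamata2 hφ (by linarith) (by linarith) (by ring)
  · rw [max_eq_right h1, max_eq_left h2, min_eq_left h1, min_eq_right h2]
    exact karamata2 hφ (by linarith) (by linarith) (by ring)
  · rw [max_eq_right h1, max_eq_right h2, min_eq_left h1, min_eq_left h2]
    rw [add_comm (|a - b| ^ s)]

end Aux

/-- polarization is non-expansive in every `L^s` (quasi-)norm. -/
theorem stmt_1 {M : Type*} [MeasurableSpace M] (μ : Measure M) [SigmaFinite μ]
    {n : ℕ} (hn : 1 ≤ n)
    (e : EuclideanSpace ℝ (Fin n)) (he : ‖e‖ = 1) (c : ℝ)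
    (s : ℝ) (hs : 1 ≤ s)
    (u v : M × EuclideanSpace ℝ (Fin n) → ℝ)
    (hu : Measurable u) (hu0 : ∀ z, 0 ≤ u z)
    (hv : Measurable v) (hv0 : ∀ z, 0 ≤ v z) :
    ∫⁻ z, ENNReal.ofReal (|polarize e c u z - polarize e c v z| ^ s) ∂(μ.prod volume) ≤
      ∫⁻ z, ENNReal.ofReal (|u z - v z| ^ s) ∂(μ.prod volume) := by
  set σ : M × EuclideanSpace ℝ (Fin n) → M × EuclideanSpace ℝ (Fin n) :=
    fun z => (z.1, reflectHyp e c z.2) with hσdef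
  -- measure preservation
  have hσmp : MeasurePreserving σ (μ.prod volume) (μ.prod volume) :=
    (MeasurePreserving.id μ).prod (reflectHyp_measurePreserving he)
  -- measurability
  have hrm : Measurable (reflectHyp e c) := reflectHyp_continuous.measurable
  have hσm : Measurable σ := measurable_fst.prodMk (hrm.comp measurable_snd)
  have hinnm : Measurable (fun z : M × EuclideanSpace ℝ (Fin n) => ⟪z.2, e⟫) := by
    have h : Continuous (fun y : EuclideanSpace ℝ (Fin n) => ⟪y, e⟫) :=
      continuous_id.inner continuous_const
    exact h.measurable.comp measurable_snd
  have hPmeas : ∀ w : M × EuclideanSpace ℝ (Fin n) → ℝ, Measurable w →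
      Measurable (polarize e c w) := by
    intro w hw
    unfold polarize
    exact Measurable.ite (measurableSet_lt measurable_const hinnm)
      (hw.max (hw.comp hσm)) (hw.min (hw.comp hσm))
  set F : (M × EuclideanSpace ℝ (Fin n)) → ℝ≥0∞ :=
    fun z => ENNReal.ofReal (|polarize e c u z - polarize e c v z| ^ s) with hF
  set G : (M × EuclideanSpace ℝ (Fin n)) → ℝ≥0∞ :=
    fun z => ENNReal.ofReal (|u z - v z| ^ s) with hG
  have hrpm : Measurable (fun x : ℝ => x ^ s) :=
    (Real.continuous_rpow_const (le_trans zero_le_one hs)).measurable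
  have hFm : Measurable F :=
    ENNReal.measurable_ofReal.comp
      (hrpm.comp (((hPmeas u hu).sub (hPmeas v hv)).abs))
  have hGm : Measurable G :=
    ENNReal.measurable_ofReal.comp (hrpm.comp ((hu.sub hv).abs))
  -- pointwise inequality
  have hpt : ∀ z, F z + F (σ z) ≤ G z + G (σ z) := by
    intro z
    have hinv : σ (σ z) = z := by
      simp only [hσdef, reflectHyp_invol he]
    rcases lt_trichotomy c ⟪z.2, e⟫ with hc | hc | hc
    · have hc' : ¬ c < ⟪(σ z).2, e⟫ := by
        simp only [hσdef]
        rw [inner_reflectHyp he]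
        linarith
      have hPu : ∀ w : M × EuclideanSpace ℝ (Fin n) → ℝ,
          polarize e c w z = max (w z) (w (σ z)) := by
        intro w; rw [polarize, if_pos hc]
      have hPu' : ∀ w : M × EuclideanSpace ℝ (Fin n) → ℝ,
          polarize e c w (σ z) = min (w z) (w (σ z)) := by
        intro w
        rw [polarize, if_neg hc']
        have h : ((σ z).1, reflectHyp e c (σ z).2) = z := hinv
        rw [h, min_comm]
      rw [hF, hG]
      simp only [hPu, hPu']
      rw [← ENNReal.ofReal_add (Real.rpow_nonneg (abs_nonneg _) _)
        (Real.rpow_nonneg (abs_nonneg _) _),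
        ← ENNReal.ofReal_add (Real.rpow_nonneg (abs_nonneg _) _)
        (Real.rpow_nonneg (abs_nonneg _) _)]
      exact ENNReal.ofReal_le_ofReal (key_real hs _ _ _ _)
    · have hfix : σ z = z := by
        show (z.1, z.2 - (2 * (⟪z.2, e⟫ - c)) • e) = z
        rw [← hc]
        simp
      have hPz : ∀ w : M × EuclideanSpace ℝ (Fin n) → ℝ, polarize e c w z = w z := by
        intro w
        rw [polarize, if_neg (by rw [← hc]; exact lt_irrefl c)]
        have h : (z.1, reflectHyp e c z.2) = z := hfix
        rw [h, min_self]
      rw [hfix, hF, hG]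
      simp only [hPz]
      exact le_rfl
    · have hc' : c < ⟪(σ z).2, e⟫ := by
        simp only [hσdef]
        rw [inner_reflectHyp he]
        linarith
      have hPu : ∀ w : M × EuclideanSpace ℝ (Fin n) → ℝ,
          polarize e c w z = min (w z) (w (σ z)) := by
        intro w; rw [polarize, if_neg (not_lt.2 hc.le)]
      have hPu' : ∀ w : M × EuclideanSpace ℝ (Fin n) → ℝ,
          polarize e c w (σ z) = max (w (σ z)) (w z) := by
        intro w
        rw [polarize, if_pos hc']
        have h : ((σ z).1, reflectHyp e c (σ z).2) = z := hinv
        rw [h]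
      rw [hF, hG]
      simp only [hPu, hPu']
      rw [← ENNReal.ofReal_add (Real.rpow_nonneg (abs_nonneg _) _)
        (Real.rpow_nonneg (abs_nonneg _) _),
        ← ENNReal.ofReal_add (Real.rpow_nonneg (abs_nonneg _) _)
        (Real.rpow_nonneg (abs_nonneg _) _)]
      refine ENNReal.ofReal_le_ofReal ?_
      have h := key_real hs (u (σ z)) (u z) (v (σ z)) (v z)
      rw [min_comm (u (σ z)) (u z), min_comm (v (σ z)) (v z)] at h
      linarith
  -- integrate
  have hmain : (∫⁻ z, F z ∂(μ.prod volume)) + (∫⁻ z, F z ∂(μ.prod volume)) ≤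
      (∫⁻ z, G z ∂(μ.prod volume)) + (∫⁻ z, G z ∂(μ.prod volume)) := by
    calc (∫⁻ z, F z ∂(μ.prod volume)) + (∫⁻ z, F z ∂(μ.prod volume))
        = (∫⁻ z, F z ∂(μ.prod volume)) + (∫⁻ z, F (σ z) ∂(μ.prod volume)) := by
          rw [hσmp.lintegral_comp hFm]
      _ = ∫⁻ z, (F z + F (σ z)) ∂(μ.prod volume) := by
          rw [lintegral_add_left hFm]
      _ ≤ ∫⁻ z, (G z + G (σ z)) ∂(μ.prod volume) := lintegral_mono hpt
      _ = (∫⁻ z, G z ∂(μ.prod volume)) + (∫⁻ z, G (σ z) ∂(μ.prod volume)) := by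
          rw [lintegral_add_left hGm]
      _ = (∫⁻ z, G z ∂(μ.prod volume)) + (∫⁻ z, G z ∂(μ.prod volume)) := by
          rw [hσmp.lintegral_comp hGm]
  have h2 : (2 : ℝ≥0∞) * (∫⁻ z, F z ∂(μ.prod volume)) ≤
      2 * (∫⁻ z, G z ∂(μ.prod volume)) := by
    rw [two_mul, two_mul]; exact hmain
  exact (ENNReal.mul_le_mul_iff_right two_ne_zero ENNReal.ofNat_ne_top).1 h2

end
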